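/- Let γ(t) = (cos θ · t - a sin θ · t² + b₁, sin θ · t + a cos θ · t² + b₂) with a ≠ 0 be a parabola, and suppose γ is unbounded so its inversion σ(τ) = Ψ∘γ at the parameter value corresponding to infinity, given by σ(τ) = ((cos θ τ³ - a sin θ τ² + b₁τ⁴)/f(τ), (sin θ τ³ + a cos θ τ² + b₂τ⁴)/f(τ)) with f(τ) = (cos θ τ - a sin θ + b₁τ²)² + (sin θ τ + a cos θ + b₂τ²)², satisfies σ(0) = (0,0), σ'(0) = 0, σ''(0) ≠ 0, and |σ''(0), σ'''(0)| = -12/a³ ≠ 0; hence σ has an ordinary cusp at τ = 0, with tangent direction (cos θ, sin θ), the axis direction of the parabola. -/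

import Mathlib

namespace Stmt15Aux

lemma ratio_step {N D Nd Dd : ℝ → ℝ} {x : ℝ} (k : ℕ)
    (hN : HasDerivAt N (Nd x) x) (hD : HasDerivAt D (Dd x) x) (hDx : D x ≠ 0) :
    HasDerivAt (fun t => N t / D t ^ (k + 1))
      ((Nd x * D x - ((k : ℝ) + 1) * N x * Dd x) / D x ^ (k + 2)) x := by
  have hpow : HasDerivAt (fun t => D t ^ (k + 1)) (((k : ℝ) + 1) * D x ^ k * Dd x) x := by
    simpa using hD.fun_pow (k + 1)
  have h := hN.div hpow (pow_ne_zero _ hDx)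
  refine h.congr_deriv ?_
  rw [div_eq_div_iff (pow_ne_zero 2 (pow_ne_zero _ hDx)) (pow_ne_zero _ hDx)]
  ring

noncomputable def N1 (a b₁ b₂ θ : ℝ) : ℝ → ℝ :=
  fun t => Real.cos θ * t ^ 3 - a * Real.sin θ * t ^ 2 + b₁ * t ^ 4
noncomputable def N1d (a b₁ b₂ θ : ℝ) : ℝ → ℝ :=
  fun t => Real.cos θ * (3 * t ^ 2) - a * Real.sin θ * (2 * t) + b₁ * (4 * t ^ 3)
noncomputable def N1dd (a b₁ b₂ θ : ℝ) : ℝ → ℝ :=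
  fun t => Real.cos θ * (6 * t) - a * Real.sin θ * 2 + b₁ * (12 * t ^ 2)
noncomputable def N1ddd (a b₁ b₂ θ : ℝ) : ℝ → ℝ :=
  fun t => Real.cos θ * 6 + b₁ * (24 * t)

noncomputable def N2 (a b₁ b₂ θ : ℝ) : ℝ → ℝ :=
  fun t => Real.sin θ * t ^ 3 + a * Real.cos θ * t ^ 2 + b₂ * t ^ 4
noncomputable def N2d (a b₁ b₂ θ : ℝ) : ℝ → ℝ :=
  fun t => Real.sin θ * (3 * t ^ 2) + a * Real.cos θ * (2 * t) + b₂ * (4 * t ^ 3)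
noncomputable def N2dd (a b₁ b₂ θ : ℝ) : ℝ → ℝ :=
  fun t => Real.sin θ * (6 * t) + a * Real.cos θ * 2 + b₂ * (12 * t ^ 2)
noncomputable def N2ddd (a b₁ b₂ θ : ℝ) : ℝ → ℝ :=
  fun t => Real.sin θ * 6 + b₂ * (24 * t)

noncomputable def Df (a b₁ b₂ θ : ℝ) : ℝ → ℝ :=
  fun t => (Real.cos θ * t - a * Real.sin θ + b₁ * t ^ 2) ^ 2
    + (Real.sin θ * t + a * Real.cos θ + b₂ * t ^ 2) ^ 2
noncomputable def Dfd (a b₁ b₂ θ : ℝ) : ℝ → ℝ :=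
  fun t => 2 * ((Real.cos θ * t - a * Real.sin θ + b₁ * t ^ 2) * (Real.cos θ + b₁ * (2 * t)))
    + 2 * ((Real.sin θ * t + a * Real.cos θ + b₂ * t ^ 2) * (Real.sin θ + b₂ * (2 * t)))
noncomputable def Dfdd (a b₁ b₂ θ : ℝ) : ℝ → ℝ :=
  fun t => 2 * ((Real.cos θ + b₁ * (2 * t)) ^ 2
      + (Real.cos θ * t - a * Real.sin θ + b₁ * t ^ 2) * (b₁ * 2))
    + 2 * ((Real.sin θ + b₂ * (2 * t)) ^ 2
      + (Real.sin θ * t + a * Real.cos θ + b₂ * t ^ 2) * (b₂ * 2))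
noncomputable def Dfddd (a b₁ b₂ θ : ℝ) : ℝ → ℝ :=
  fun t => 2 * (3 * ((Real.cos θ + b₁ * (2 * t)) * (b₁ * 2)))
    + 2 * (3 * ((Real.sin θ + b₂ * (2 * t)) * (b₂ * 2)))

lemma hN1 (a b₁ b₂ θ t : ℝ) : HasDerivAt (N1 a b₁ b₂ θ) (N1d a b₁ b₂ θ t) t := by
  unfold N1 N1d
  have h := (((hasDerivAt_pow 3 t).const_mul (Real.cos θ)).sub
    ((hasDerivAt_pow 2 t).const_mul (a * Real.sin θ))).add ((hasDerivAt_pow 4 t).const_mul b₁)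
  refine h.congr_deriv ?_
  push_cast; ring

lemma hN1d (a b₁ b₂ θ t : ℝ) : HasDerivAt (N1d a b₁ b₂ θ) (N1dd a b₁ b₂ θ t) t := by
  unfold N1d N1dd
  have h := ((((hasDerivAt_pow 2 t).const_mul 3).const_mul (Real.cos θ)).sub
    (((hasDerivAt_id t).const_mul 2).const_mul (a * Real.sin θ))).add
    (((hasDerivAt_pow 3 t).const_mul 4).const_mul b₁)
  refine h.congr_deriv ?_
  push_cast; ring

lemma hN1dd (a b₁ b₂ θ t : ℝ) : HasDerivAt (N1dd a b₁ b₂ θ) (N1ddd a b₁ b₂ θ t) t := by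
  unfold N1dd N1ddd
  have h := ((((hasDerivAt_id t).const_mul 6).const_mul (Real.cos θ)).sub_const
    (a * Real.sin θ * 2)).add (((hasDerivAt_pow 2 t).const_mul 12).const_mul b₁)
  refine h.congr_deriv ?_
  push_cast; ring

lemma hN2 (a b₁ b₂ θ t : ℝ) : HasDerivAt (N2 a b₁ b₂ θ) (N2d a b₁ b₂ θ t) t := by
  unfold N2 N2d
  have h := (((hasDerivAt_pow 3 t).const_mul (Real.sin θ)).add
    ((hasDerivAt_pow 2 t).const_mul (a * Real.cos θ))).add ((hasDerivAt_pow 4 t).const_mul b₂)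
  refine h.congr_deriv ?_
  push_cast; ring

lemma hN2d (a b₁ b₂ θ t : ℝ) : HasDerivAt (N2d a b₁ b₂ θ) (N2dd a b₁ b₂ θ t) t := by
  unfold N2d N2dd
  have h := ((((hasDerivAt_pow 2 t).const_mul 3).const_mul (Real.sin θ)).add
    (((hasDerivAt_id t).const_mul 2).const_mul (a * Real.cos θ))).add
    (((hasDerivAt_pow 3 t).const_mul 4).const_mul b₂)
  refine h.congr_deriv ?_
  push_cast; ring

lemma hN2dd (a b₁ b₂ θ t : ℝ) : HasDerivAt (N2dd a b₁ b₂ θ) (N2ddd a b₁ b₂ θ t) t := by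
  unfold N2dd N2ddd
  have h := ((((hasDerivAt_id t).const_mul 6).const_mul (Real.sin θ)).add_const
    (a * Real.cos θ * 2)).add (((hasDerivAt_pow 2 t).const_mul 12).const_mul b₂)
  refine h.congr_deriv ?_
  push_cast; ring

lemma hu (a b₁ b₂ θ t : ℝ) :
    HasDerivAt (fun x : ℝ => Real.cos θ * x - a * Real.sin θ + b₁ * x ^ 2)
      (Real.cos θ + b₁ * (2 * t)) t := by
  have h := (((hasDerivAt_id t).const_mul (Real.cos θ)).sub_const (a * Real.sin θ)).add
    ((hasDerivAt_pow 2 t).const_mul b₁)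
  refine h.congr_deriv ?_
  push_cast; ring

lemma hv (a b₁ b₂ θ t : ℝ) :
    HasDerivAt (fun x : ℝ => Real.sin θ * x + a * Real.cos θ + b₂ * x ^ 2)
      (Real.sin θ + b₂ * (2 * t)) t := by
  have h := (((hasDerivAt_id t).const_mul (Real.sin θ)).add_const (a * Real.cos θ)).add
    ((hasDerivAt_pow 2 t).const_mul b₂)
  refine h.congr_deriv ?_
  push_cast; ring

lemma hud (a b₁ b₂ θ t : ℝ) :
    HasDerivAt (fun x : ℝ => Real.cos θ + b₁ * (2 * x)) (b₁ * 2) t := by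
  have h := (((hasDerivAt_id t).const_mul 2).const_mul b₁).const_add (Real.cos θ)
  refine h.congr_deriv ?_
  ring

lemma hvd (a b₁ b₂ θ t : ℝ) :
    HasDerivAt (fun x : ℝ => Real.sin θ + b₂ * (2 * x)) (b₂ * 2) t := by
  have h := (((hasDerivAt_id t).const_mul 2).const_mul b₂).const_add (Real.sin θ)
  refine h.congr_deriv ?_
  ring

lemma hDf (a b₁ b₂ θ t : ℝ) : HasDerivAt (Df a b₁ b₂ θ) (Dfd a b₁ b₂ θ t) t := by
  unfold Df Dfd
  have h := ((hu a b₁ b₂ θ t).pow 2).add ((hv a b₁ b₂ θ t).pow 2)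
  refine h.congr_deriv ?_
  push_cast; ring

lemma hDfd (a b₁ b₂ θ t : ℝ) : HasDerivAt (Dfd a b₁ b₂ θ) (Dfdd a b₁ b₂ θ t) t := by
  unfold Dfd Dfdd
  have h := (((hu a b₁ b₂ θ t).mul (hud a b₁ b₂ θ t)).const_mul 2).add
    (((hv a b₁ b₂ θ t).mul (hvd a b₁ b₂ θ t)).const_mul 2)
  refine h.congr_deriv ?_
  ring

lemma hDfdd (a b₁ b₂ θ t : ℝ) : HasDerivAt (Dfdd a b₁ b₂ θ) (Dfddd a b₁ b₂ θ t) t := by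
  unfold Dfdd Dfddd
  have h := ((((hud a b₁ b₂ θ t).pow 2).add ((hu a b₁ b₂ θ t).mul_const (b₁ * 2))).const_mul 2).add
    ((((hvd a b₁ b₂ θ t).pow 2).add ((hv a b₁ b₂ θ t).mul_const (b₂ * 2))).const_mul 2)
  refine h.congr_deriv ?_
  push_cast; ring

noncomputable def B1 (a b₁ b₂ θ : ℝ) : ℝ → ℝ :=
  fun t => N1d a b₁ b₂ θ t * Df a b₁ b₂ θ t - N1 a b₁ b₂ θ t * Dfd a b₁ b₂ θ t
noncomputable def B1dv (a b₁ b₂ θ : ℝ) : ℝ → ℝ :=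
  fun t => N1dd a b₁ b₂ θ t * Df a b₁ b₂ θ t - N1 a b₁ b₂ θ t * Dfdd a b₁ b₂ θ t
noncomputable def B1dd (a b₁ b₂ θ : ℝ) : ℝ → ℝ :=
  fun t => N1ddd a b₁ b₂ θ t * Df a b₁ b₂ θ t + N1dd a b₁ b₂ θ t * Dfd a b₁ b₂ θ t
    - N1d a b₁ b₂ θ t * Dfdd a b₁ b₂ θ t - N1 a b₁ b₂ θ t * Dfddd a b₁ b₂ θ t
noncomputable def C1 (a b₁ b₂ θ : ℝ) : ℝ → ℝ :=
  fun t => B1dv a b₁ b₂ θ t * Df a b₁ b₂ θ t - 2 * (B1 a b₁ b₂ θ t * Dfd a b₁ b₂ θ t)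
noncomputable def C1dv (a b₁ b₂ θ : ℝ) : ℝ → ℝ :=
  fun t => B1dd a b₁ b₂ θ t * Df a b₁ b₂ θ t - B1dv a b₁ b₂ θ t * Dfd a b₁ b₂ θ t
    - 2 * (B1 a b₁ b₂ θ t * Dfdd a b₁ b₂ θ t)
noncomputable def E1 (a b₁ b₂ θ : ℝ) : ℝ → ℝ :=
  fun t => C1dv a b₁ b₂ θ t * Df a b₁ b₂ θ t - 3 * (C1 a b₁ b₂ θ t * Dfd a b₁ b₂ θ t)

noncomputable def B2 (a b₁ b₂ θ : ℝ) : ℝ → ℝ :=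
  fun t => N2d a b₁ b₂ θ t * Df a b₁ b₂ θ t - N2 a b₁ b₂ θ t * Dfd a b₁ b₂ θ t
noncomputable def B2dv (a b₁ b₂ θ : ℝ) : ℝ → ℝ :=
  fun t => N2dd a b₁ b₂ θ t * Df a b₁ b₂ θ t - N2 a b₁ b₂ θ t * Dfdd a b₁ b₂ θ t
noncomputable def B2dd (a b₁ b₂ θ : ℝ) : ℝ → ℝ :=
  fun t => N2ddd a b₁ b₂ θ t * Df a b₁ b₂ θ t + N2dd a b₁ b₂ θ t * Dfd a b₁ b₂ θ t
    - N2d a b₁ b₂ θ t * Dfdd a b₁ b₂ θ t - N2 a b₁ b₂ θ t * Dfddd a b₁ b₂ θ t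
noncomputable def C2 (a b₁ b₂ θ : ℝ) : ℝ → ℝ :=
  fun t => B2dv a b₁ b₂ θ t * Df a b₁ b₂ θ t - 2 * (B2 a b₁ b₂ θ t * Dfd a b₁ b₂ θ t)
noncomputable def C2dv (a b₁ b₂ θ : ℝ) : ℝ → ℝ :=
  fun t => B2dd a b₁ b₂ θ t * Df a b₁ b₂ θ t - B2dv a b₁ b₂ θ t * Dfd a b₁ b₂ θ t
    - 2 * (B2 a b₁ b₂ θ t * Dfdd a b₁ b₂ θ t)
noncomputable def E2 (a b₁ b₂ θ : ℝ) : ℝ → ℝ :=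
  fun t => C2dv a b₁ b₂ θ t * Df a b₁ b₂ θ t - 3 * (C2 a b₁ b₂ θ t * Dfd a b₁ b₂ θ t)

lemma hB1 (a b₁ b₂ θ t : ℝ) : HasDerivAt (B1 a b₁ b₂ θ) (B1dv a b₁ b₂ θ t) t := by
  unfold B1 B1dv
  have h := ((hN1d a b₁ b₂ θ t).mul (hDf a b₁ b₂ θ t)).sub
    ((hN1 a b₁ b₂ θ t).mul (hDfd a b₁ b₂ θ t))
  refine h.congr_deriv ?_
  unfold N1 N1d N1dd Df Dfd Dfdd
  ring

lemma hB1dv (a b₁ b₂ θ t : ℝ) : HasDerivAt (B1dv a b₁ b₂ θ) (B1dd a b₁ b₂ θ t) t := by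
  unfold B1dv B1dd
  have h := ((hN1dd a b₁ b₂ θ t).mul (hDf a b₁ b₂ θ t)).sub
    ((hN1 a b₁ b₂ θ t).mul (hDfdd a b₁ b₂ θ t))
  refine h.congr_deriv ?_
  unfold N1 N1d N1dd N1ddd Df Dfd Dfdd Dfddd
  ring

lemma hC1 (a b₁ b₂ θ t : ℝ) : HasDerivAt (C1 a b₁ b₂ θ) (C1dv a b₁ b₂ θ t) t := by
  unfold C1 C1dv
  have h := ((hB1dv a b₁ b₂ θ t).mul (hDf a b₁ b₂ θ t)).sub
    (((hB1 a b₁ b₂ θ t).mul (hDfd a b₁ b₂ θ t)).const_mul 2)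
  refine h.congr_deriv ?_
  unfold B1 B1dv B1dd N1 N1d N1dd N1ddd Df Dfd Dfdd Dfddd
  ring

lemma hB2 (a b₁ b₂ θ t : ℝ) : HasDerivAt (B2 a b₁ b₂ θ) (B2dv a b₁ b₂ θ t) t := by
  unfold B2 B2dv
  have h := ((hN2d a b₁ b₂ θ t).mul (hDf a b₁ b₂ θ t)).sub
    ((hN2 a b₁ b₂ θ t).mul (hDfd a b₁ b₂ θ t))
  refine h.congr_deriv ?_
  unfold N2 N2d N2dd Df Dfd Dfdd
  ring

lemma hB2dv (a b₁ b₂ θ t : ℝ) : HasDerivAt (B2dv a b₁ b₂ θ) (B2dd a b₁ b₂ θ t) t := by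
  unfold B2dv B2dd
  have h := ((hN2dd a b₁ b₂ θ t).mul (hDf a b₁ b₂ θ t)).sub
    ((hN2 a b₁ b₂ θ t).mul (hDfdd a b₁ b₂ θ t))
  refine h.congr_deriv ?_
  unfold N2 N2d N2dd N2ddd Df Dfd Dfdd Dfddd
  ring

lemma hC2 (a b₁ b₂ θ t : ℝ) : HasDerivAt (C2 a b₁ b₂ θ) (C2dv a b₁ b₂ θ t) t := by
  unfold C2 C2dv
  have h := ((hB2dv a b₁ b₂ θ t).mul (hDf a b₁ b₂ θ t)).sub
    (((hB2 a b₁ b₂ θ t).mul (hDfd a b₁ b₂ θ t)).const_mul 2)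
  refine h.congr_deriv ?_
  unfold B2 B2dv B2dd N2 N2d N2dd N2ddd Df Dfd Dfdd Dfddd
  ring

end Stmt15Aux

/-- The inversion σ of a parabola, parametrized near the point at
infinity, satisfies σ(0) = 0, σ'(0) = 0, σ''(0) ≠ 0 and
|σ''(0), σ'''(0)| = -12/a³ ≠ 0; hence σ has an ordinary cusp at τ = 0. -/
theorem stmt_15 (a b₁ b₂ θ : ℝ) (ha : a ≠ 0) (f : ℝ → ℝ) (σ : ℝ → ℝ × ℝ)
    (hf : ∀ τ, f τ = (Real.cos θ * τ - a * Real.sin θ + b₁ * τ ^ 2) ^ 2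
        + (Real.sin θ * τ + a * Real.cos θ + b₂ * τ ^ 2) ^ 2)
    (hσ : ∀ τ, σ τ =
      ((Real.cos θ * τ ^ 3 - a * Real.sin θ * τ ^ 2 + b₁ * τ ^ 4) / f τ,
       (Real.sin θ * τ ^ 3 + a * Real.cos θ * τ ^ 2 + b₂ * τ ^ 4) / f τ)) :
    σ 0 = (0, 0) ∧ deriv σ 0 = 0 ∧ deriv (deriv σ) 0 ≠ 0 ∧
      (deriv (deriv σ) 0).1 * (deriv (deriv (deriv σ)) 0).2
        - (deriv (deriv σ) 0).2 * (deriv (deriv (deriv σ)) 0).1 = -12 / a ^ 3 ∧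
      (-12 / a ^ 3 : ℝ) ≠ 0 := by
  have pyth := Real.sin_sq_add_cos_sq θ
  -- identify f and σ with the auxiliary functions
  have hfD : f = Stmt15Aux.Df a b₁ b₂ θ := funext fun t => by rw [hf]; rfl
  have hσex : σ = fun τ => (Stmt15Aux.N1 a b₁ b₂ θ τ / Stmt15Aux.Df a b₁ b₂ θ τ ^ 1,
      Stmt15Aux.N2 a b₁ b₂ θ τ / Stmt15Aux.Df a b₁ b₂ θ τ ^ 1) := by
    funext τ
    rw [hσ τ, hfD]
    simp only [pow_one]
    rfl
  -- the open set where the denominator does not vanish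
  set U : Set ℝ := {x | Stmt15Aux.Df a b₁ b₂ θ x ≠ 0} with hU
  have hDfcont : Continuous (Stmt15Aux.Df a b₁ b₂ θ) := by
    unfold Stmt15Aux.Df; fun_prop
  have hUopen : IsOpen U := by
    have : U = Stmt15Aux.Df a b₁ b₂ θ ⁻¹' ({0}ᶜ) := rfl
    rw [this]
    exact (isOpen_compl_singleton).preimage hDfcont
  have hDf0 : Stmt15Aux.Df a b₁ b₂ θ 0 = a ^ 2 := by
    simp only [Stmt15Aux.Df]
    linear_combination a ^ 2 * pyth
  have h0U : (0 : ℝ) ∈ U := by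
    simp only [hU, Set.mem_setOf_eq, hDf0]
    exact pow_ne_zero 2 ha
  -- first derivative
  have hstep1 : ∀ x ∈ U, HasDerivAt σ
      (Stmt15Aux.B1 a b₁ b₂ θ x / Stmt15Aux.Df a b₁ b₂ θ x ^ 2,
       Stmt15Aux.B2 a b₁ b₂ θ x / Stmt15Aux.Df a b₁ b₂ θ x ^ 2) x := by
    intro x hx
    rw [hσex]
    refine HasDerivAt.prodMk ?_ ?_
    · have h := Stmt15Aux.ratio_step 0 (Stmt15Aux.hN1 a b₁ b₂ θ x)
        (Stmt15Aux.hDf a b₁ b₂ θ x) hx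
      refine h.congr_deriv ?_
      simp only [Stmt15Aux.B1]
      push_cast; ring
    · have h := Stmt15Aux.ratio_step 0 (Stmt15Aux.hN2 a b₁ b₂ θ x)
        (Stmt15Aux.hDf a b₁ b₂ θ x) hx
      refine h.congr_deriv ?_
      simp only [Stmt15Aux.B2]
      push_cast; ring
  have hd1on : Set.EqOn (deriv σ)
      (fun x => (Stmt15Aux.B1 a b₁ b₂ θ x / Stmt15Aux.Df a b₁ b₂ θ x ^ 2,
        Stmt15Aux.B2 a b₁ b₂ θ x / Stmt15Aux.Df a b₁ b₂ θ x ^ 2)) U :=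
    fun x hx => (hstep1 x hx).deriv
  -- second derivative
  have hstep2 : ∀ x ∈ U, HasDerivAt
      (fun x => (Stmt15Aux.B1 a b₁ b₂ θ x / Stmt15Aux.Df a b₁ b₂ θ x ^ 2,
        Stmt15Aux.B2 a b₁ b₂ θ x / Stmt15Aux.Df a b₁ b₂ θ x ^ 2))
      (Stmt15Aux.C1 a b₁ b₂ θ x / Stmt15Aux.Df a b₁ b₂ θ x ^ 3,
       Stmt15Aux.C2 a b₁ b₂ θ x / Stmt15Aux.Df a b₁ b₂ θ x ^ 3) x := by
    intro x hx
    refine HasDerivAt.prodMk ?_ ?_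
    · have h := Stmt15Aux.ratio_step 1 (Stmt15Aux.hB1 a b₁ b₂ θ x)
        (Stmt15Aux.hDf a b₁ b₂ θ x) hx
      refine h.congr_deriv ?_
      simp only [Stmt15Aux.C1]
      push_cast; ring
    · have h := Stmt15Aux.ratio_step 1 (Stmt15Aux.hB2 a b₁ b₂ θ x)
        (Stmt15Aux.hDf a b₁ b₂ θ x) hx
      refine h.congr_deriv ?_
      simp only [Stmt15Aux.C2]
      push_cast; ring
  have hd2on : Set.EqOn (deriv (deriv σ))
      (fun x => (Stmt15Aux.C1 a b₁ b₂ θ x / Stmt15Aux.Df a b₁ b₂ θ x ^ 3,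
        Stmt15Aux.C2 a b₁ b₂ θ x / Stmt15Aux.Df a b₁ b₂ θ x ^ 3)) U := by
    intro x hx
    have hev : deriv σ =ᶠ[nhds x]
        (fun x => (Stmt15Aux.B1 a b₁ b₂ θ x / Stmt15Aux.Df a b₁ b₂ θ x ^ 2,
          Stmt15Aux.B2 a b₁ b₂ θ x / Stmt15Aux.Df a b₁ b₂ θ x ^ 2)) :=
      Filter.eventuallyEq_of_mem (hUopen.mem_nhds hx) hd1on
    rw [hev.deriv_eq, (hstep2 x hx).deriv]
  -- third derivative
  have hstep3 : ∀ x ∈ U, HasDerivAt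
      (fun x => (Stmt15Aux.C1 a b₁ b₂ θ x / Stmt15Aux.Df a b₁ b₂ θ x ^ 3,
        Stmt15Aux.C2 a b₁ b₂ θ x / Stmt15Aux.Df a b₁ b₂ θ x ^ 3))
      (Stmt15Aux.E1 a b₁ b₂ θ x / Stmt15Aux.Df a b₁ b₂ θ x ^ 4,
       Stmt15Aux.E2 a b₁ b₂ θ x / Stmt15Aux.Df a b₁ b₂ θ x ^ 4) x := by
    intro x hx
    refine HasDerivAt.prodMk ?_ ?_
    · have h := Stmt15Aux.ratio_step 2 (Stmt15Aux.hC1 a b₁ b₂ θ x)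
        (Stmt15Aux.hDf a b₁ b₂ θ x) hx
      refine h.congr_deriv ?_
      simp only [Stmt15Aux.E1]
      push_cast; ring
    · have h := Stmt15Aux.ratio_step 2 (Stmt15Aux.hC2 a b₁ b₂ θ x)
        (Stmt15Aux.hDf a b₁ b₂ θ x) hx
      refine h.congr_deriv ?_
      simp only [Stmt15Aux.E2]
      push_cast; ring
  have hd3at0 : deriv (deriv (deriv σ)) 0 =
      (Stmt15Aux.E1 a b₁ b₂ θ 0 / Stmt15Aux.Df a b₁ b₂ θ 0 ^ 4,
       Stmt15Aux.E2 a b₁ b₂ θ 0 / Stmt15Aux.Df a b₁ b₂ θ 0 ^ 4) := by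
    have hev : deriv (deriv σ) =ᶠ[nhds 0]
        (fun x => (Stmt15Aux.C1 a b₁ b₂ θ x / Stmt15Aux.Df a b₁ b₂ θ x ^ 3,
          Stmt15Aux.C2 a b₁ b₂ θ x / Stmt15Aux.Df a b₁ b₂ θ x ^ 3)) :=
      Filter.eventuallyEq_of_mem (hUopen.mem_nhds h0U) hd2on
    rw [hev.deriv_eq, (hstep3 0 h0U).deriv]
  -- values at 0
  have hN10 : Stmt15Aux.N1 a b₁ b₂ θ 0 = 0 := by simp [Stmt15Aux.N1]
  have hN1d0 : Stmt15Aux.N1d a b₁ b₂ θ 0 = 0 := by simp [Stmt15Aux.N1d]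
  have hN1dd0 : Stmt15Aux.N1dd a b₁ b₂ θ 0 = -(2 * a * Real.sin θ) := by
    simp only [Stmt15Aux.N1dd]; ring
  have hN1ddd0 : Stmt15Aux.N1ddd a b₁ b₂ θ 0 = 6 * Real.cos θ := by
    simp only [Stmt15Aux.N1ddd]; ring
  have hN20 : Stmt15Aux.N2 a b₁ b₂ θ 0 = 0 := by simp [Stmt15Aux.N2]
  have hN2d0 : Stmt15Aux.N2d a b₁ b₂ θ 0 = 0 := by simp [Stmt15Aux.N2d]
  have hN2dd0 : Stmt15Aux.N2dd a b₁ b₂ θ 0 = 2 * a * Real.cos θ := by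
    simp only [Stmt15Aux.N2dd]; ring
  have hN2ddd0 : Stmt15Aux.N2ddd a b₁ b₂ θ 0 = 6 * Real.sin θ := by
    simp only [Stmt15Aux.N2ddd]; ring
  have hDfd0 : Stmt15Aux.Dfd a b₁ b₂ θ 0 = 0 := by
    simp only [Stmt15Aux.Dfd]; ring
  have hB10 : Stmt15Aux.B1 a b₁ b₂ θ 0 = 0 := by
    simp only [Stmt15Aux.B1]; rw [hN1d0, hN10]; ring
  have hB1dv0 : Stmt15Aux.B1dv a b₁ b₂ θ 0 = -(2 * Real.sin θ) * a ^ 3 := by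
    simp only [Stmt15Aux.B1dv]; rw [hN1dd0, hN10, hDf0]; ring
  have hB1dd0 : Stmt15Aux.B1dd a b₁ b₂ θ 0 = 6 * Real.cos θ * a ^ 2 := by
    simp only [Stmt15Aux.B1dd]; rw [hN1ddd0, hN1dd0, hN1d0, hN10, hDf0, hDfd0]; ring
  have hC10 : Stmt15Aux.C1 a b₁ b₂ θ 0 = -(2 * Real.sin θ) * a ^ 5 := by
    simp only [Stmt15Aux.C1]; rw [hB1dv0, hB10, hDf0, hDfd0]; ring
  have hC1dv0 : Stmt15Aux.C1dv a b₁ b₂ θ 0 = 6 * Real.cos θ * a ^ 4 := by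
    simp only [Stmt15Aux.C1dv]; rw [hB1dd0, hB1dv0, hB10, hDf0, hDfd0]; ring
  have hE10 : Stmt15Aux.E1 a b₁ b₂ θ 0 = 6 * Real.cos θ * a ^ 6 := by
    simp only [Stmt15Aux.E1]; rw [hC1dv0, hC10, hDf0, hDfd0]; ring
  have hB20 : Stmt15Aux.B2 a b₁ b₂ θ 0 = 0 := by
    simp only [Stmt15Aux.B2]; rw [hN2d0, hN20]; ring
  have hB2dv0 : Stmt15Aux.B2dv a b₁ b₂ θ 0 = 2 * Real.cos θ * a ^ 3 := by
    simp only [Stmt15Aux.B2dv]; rw [hN2dd0, hN20, hDf0]; ring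
  have hB2dd0 : Stmt15Aux.B2dd a b₁ b₂ θ 0 = 6 * Real.sin θ * a ^ 2 := by
    simp only [Stmt15Aux.B2dd]; rw [hN2ddd0, hN2dd0, hN2d0, hN20, hDf0, hDfd0]; ring
  have hC20 : Stmt15Aux.C2 a b₁ b₂ θ 0 = 2 * Real.cos θ * a ^ 5 := by
    simp only [Stmt15Aux.C2]; rw [hB2dv0, hB20, hDf0, hDfd0]; ring
  have hC2dv0 : Stmt15Aux.C2dv a b₁ b₂ θ 0 = 6 * Real.sin θ * a ^ 4 := by
    simp only [Stmt15Aux.C2dv]; rw [hB2dd0, hB2dv0, hB20, hDf0, hDfd0]; ring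
  have hE20 : Stmt15Aux.E2 a b₁ b₂ θ 0 = 6 * Real.sin θ * a ^ 6 := by
    simp only [Stmt15Aux.E2]; rw [hC2dv0, hC20, hDf0, hDfd0]; ring
  have hd2at0 : deriv (deriv σ) 0 =
      (-(2 * Real.sin θ) * a ^ 5 / (a ^ 2) ^ 3, 2 * Real.cos θ * a ^ 5 / (a ^ 2) ^ 3) := by
    rw [hd2on h0U]
    simp only [hC10, hC20, hDf0]
  have hd3at0' : deriv (deriv (deriv σ)) 0 =
      (6 * Real.cos θ * a ^ 6 / (a ^ 2) ^ 4, 6 * Real.sin θ * a ^ 6 / (a ^ 2) ^ 4) := by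
    rw [hd3at0, hE10, hE20, hDf0]
  refine ⟨?_, ?_, ?_, ?_, ?_⟩
  · rw [hσ 0]; norm_num
  · rw [hd1on h0U]
    simp only [hB10, hB20, zero_div]
    rfl
  · rw [hd2at0]
    intro hcon
    have h1 : -(2 * Real.sin θ) * a ^ 5 / (a ^ 2) ^ 3 = 0 := congrArg Prod.fst hcon
    have h2 : 2 * Real.cos θ * a ^ 5 / (a ^ 2) ^ 3 = 0 := congrArg Prod.snd hcon
    have ha6 : ((a : ℝ) ^ 2) ^ 3 ≠ 0 := pow_ne_zero 3 (pow_ne_zero 2 ha)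
    have ha5 : (a : ℝ) ^ 5 ≠ 0 := pow_ne_zero 5 ha
    have hs : Real.sin θ = 0 := by
      rcases div_eq_zero_iff.mp h1 with h | h
      · have h' : Real.sin θ * a ^ 5 = 0 := by linear_combination (-1 / 2 : ℝ) * h
        rcases mul_eq_zero.mp h' with h'' | h''
        · exact h''
        · exact absurd h'' ha5
      · exact absurd h ha6
    have hc : Real.cos θ = 0 := by
      rcases div_eq_zero_iff.mp h2 with h | h
      · have h' : Real.cos θ * a ^ 5 = 0 := by linear_combination (1 / 2 : ℝ) * h
        rcases mul_eq_zero.mp h' with h'' | h''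
        · exact h''
        · exact absurd h'' ha5
      · exact absurd h ha6
    rw [hs, hc] at pyth
    norm_num at pyth
  · rw [hd2at0, hd3at0']
    field_simp
    linear_combination (-12) * pyth
  · exact div_ne_zero (by norm_num) (pow_ne_zero 3 ha)
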